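/- Let X be a finite nonempty set, P a probability distribution on X with P(x) > 0 for all x, ψ : X → (0,∞) a function with ∑_{x∈X} ψ(x)^{-1} ≤ k for some k > 0, and ρ ∈ (-1,0) ∪ (0,∞). Set α = 1/(1+ρ). Then (1/ρ) · log(∑_{x∈X} P(x) · ψ(x)^ρ) ≥ (1/(1-α)) · log(∑_{x∈X} P(x)^α) − log k. -/

import Mathlib

open Real Finset

private lemma holder_split {ι : Type*} [Fintype ι] (a b : ι → ℝ)
    (ha : ∀ i, 0 ≤ a i) (hb : ∀ i, 0 ≤ b i) {t : ℝ} (ht0 : 0 < t) (ht1 : t < 1) :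
    ∑ i, a i ^ t * b i ^ (1 - t) ≤ (∑ i, a i) ^ t * (∑ i, b i) ^ (1 - t) := by
  have h1t : 0 < 1 - t := by linarith
  have hpq : Real.HolderConjugate (1/t) (1/(1-t)) := by
    rw [Real.holderConjugate_iff]; constructor
    · rw [lt_div_iff₀ ht0]; linarith
    · field_simp; ring
  have h := Real.inner_le_Lp_mul_Lq_of_nonneg Finset.univ (f := fun i => a i ^ t)
      (g := fun i => b i ^ (1 - t)) hpq
      (fun i _ => Real.rpow_nonneg (ha i) t) (fun i _ => Real.rpow_nonneg (hb i) (1 - t))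
  simp only [one_div, inv_inv] at h ⊢
  calc ∑ i, a i ^ t * b i ^ (1 - t)
      ≤ (∑ i, (a i ^ t) ^ t⁻¹) ^ t * (∑ i, (b i ^ (1-t)) ^ (1-t)⁻¹) ^ (1 - t) := by
        simpa using h
    _ = (∑ i, a i) ^ t * (∑ i, b i) ^ (1 - t) := by
        congr 1
        · congr 1
          exact Finset.sum_congr rfl fun i _ => by
            rw [← Real.rpow_mul (ha i), mul_inv_cancel₀ (ne_of_gt ht0), Real.rpow_one]
        · congr 1
          exact Finset.sum_congr rfl fun i _ => by
            rw [← Real.rpow_mul (hb i), mul_inv_cancel₀ (ne_of_gt h1t), Real.rpow_one]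

theorem stmt0 {X : Type*} [Fintype X] [Nonempty X]
    (P : X → ℝ) (hP : ∀ x, 0 < P x) (hPsum : ∑ x, P x = 1)
    (ψ : X → ℝ) (hψ : ∀ x, 0 < ψ x)
    (k : ℝ) (hk : 0 < k) (hksum : ∑ x, (ψ x)⁻¹ ≤ k)
    (ρ : ℝ) (hρ : ρ ∈ Set.Ioo (-1 : ℝ) 0 ∪ Set.Ioi (0 : ℝ))
    (α : ℝ) (hα : α = 1 / (1 + ρ)) :
    (1 / ρ) * Real.logb 2 (∑ x, P x * ψ x ^ ρ) ≥
      (1 / (1 - α)) * Real.logb 2 (∑ x, P x ^ α) - Real.logb 2 k := by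
  have hρ1 : (0:ℝ) < 1 + ρ := by
    rcases hρ with ⟨h1, _⟩ | h1 <;> [linarith; (simp only [Set.mem_Ioi] at h1; linarith)]
  have hρ0 : ρ ≠ 0 := by
    rcases hρ with ⟨_, h2⟩ | h2
    · exact ne_of_lt h2
    · simp only [Set.mem_Ioi] at h2; exact ne_of_gt h2
  have hαpos : 0 < α := by rw [hα]; positivity
  have hα1 : α * (1 + ρ) = 1 := by rw [hα]; field_simp
  have h1mα : 1 - α = ρ * α := by nlinarith
  have hEpos : 0 < ∑ x, P x * ψ x ^ ρ :=
    Finset.sum_pos (fun x _ => mul_pos (hP x) (Real.rpow_pos_of_pos (hψ x) ρ)) univ_nonempty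
  have hSpos : 0 < ∑ x, P x ^ α :=
    Finset.sum_pos (fun x _ => Real.rpow_pos_of_pos (hP x) α) univ_nonempty
  have hKpos : 0 < ∑ x, (ψ x)⁻¹ :=
    Finset.sum_pos (fun x _ => inv_pos.2 (hψ x)) univ_nonempty
  set E := ∑ x, P x * ψ x ^ ρ with hE
  set S := ∑ x, P x ^ α with hS
  set lE := Real.log E
  set lS := Real.log S
  set lk := Real.log k
  have hL2 : 0 < Real.log 2 := Real.log_pos (by norm_num)
  have hre : ((1 / ρ) * lE + lk) * (1 - α) = α * lE + (1 - α) * lk := by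
    rw [h1mα]; field_simp
  -- reduce to an inequality about natural logs
  rw [ge_iff_le, Real.logb, Real.logb, Real.logb,
    show (1 / (1 - α)) * (lS / Real.log 2) - lk / Real.log 2
        = ((1 / (1 - α)) * lS - lk) / Real.log 2 from by ring,
    show (1 / ρ) * (lE / Real.log 2) = ((1 / ρ) * lE) / Real.log 2 from by ring,
    div_le_div_iff_of_pos_right hL2, one_div_mul_eq_div]
  rcases hρ with ⟨hn1, hneg⟩ | hpos
  · -- ρ < 0 : α > 1, reverse direction via Hölder with t = α⁻¹
    have hαgt1 : 1 < α := by rw [hα, lt_div_iff₀ hρ1]; linarith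
    have ht0 : 0 < α⁻¹ := by positivity
    have ht1 : α⁻¹ < 1 := by rw [inv_lt_one_iff₀]; right; exact hαgt1
    have hexp : -(1 - α⁻¹) = ρ := by
      have hαne : α ≠ 0 := ne_of_gt hαpos
      field_simp
      linarith [h1mα]
    have hsum : E = ∑ x, (P x ^ α) ^ α⁻¹ * ((ψ x)⁻¹) ^ (1 - α⁻¹) := by
      refine Finset.sum_congr rfl fun x _ => ?_
      rw [← Real.rpow_mul (le_of_lt (hP x)), mul_inv_cancel₀ (ne_of_gt hαpos), Real.rpow_one,
        Real.inv_rpow (le_of_lt (hψ x)), ← Real.rpow_neg (le_of_lt (hψ x)), hexp]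
    have hH : E ≤ S ^ α⁻¹ * (∑ x, (ψ x)⁻¹) ^ (1 - α⁻¹) := by
      rw [hsum]
      exact holder_split _ _ (fun x => le_of_lt (Real.rpow_pos_of_pos (hP x) α))
        (fun x => le_of_lt (inv_pos.2 (hψ x))) ht0 ht1
    have hH2 : E ≤ S ^ α⁻¹ * k ^ (1 - α⁻¹) := by
      refine hH.trans (mul_le_mul_of_nonneg_left ?_ (le_of_lt (Real.rpow_pos_of_pos hSpos _)))
      exact Real.rpow_le_rpow (le_of_lt hKpos) hksum (by linarith)
    have hlog : lE ≤ α⁻¹ * lS + (1 - α⁻¹) * lk := by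
      have := Real.log_le_log hEpos hH2
      rwa [Real.log_mul (ne_of_gt (Real.rpow_pos_of_pos hSpos _))
        (ne_of_gt (Real.rpow_pos_of_pos hk _)), Real.log_rpow hSpos, Real.log_rpow hk] at this
    have hkey : α * lE + (1 - α) * lk ≤ lS := by
      have h2 := mul_le_mul_of_nonneg_left hlog (le_of_lt hαpos)
      have heq : α * (α⁻¹ * lS + (1 - α⁻¹) * lk) = lS + (α - 1) * lk := by
        field_simp
      rw [heq] at h2
      linarith
    have h1mαneg : 1 - α < 0 := by linarith
    have h1 : ((1 / ρ) * lE + lk) * (1 - α) ≤ lS := by rw [hre]; exact hkey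
    have h2 := (div_le_iff_of_neg h1mαneg).2 h1
    linarith
  · -- ρ > 0 : 0 < α < 1, direct Hölder with t = α
    simp only [Set.mem_Ioi] at hpos
    have hαlt1 : α < 1 := by rw [hα, div_lt_one hρ1]; linarith
    have hsum : S = ∑ x, (P x * ψ x ^ ρ) ^ α * ((ψ x)⁻¹) ^ (1 - α) := by
      refine Finset.sum_congr rfl fun x _ => ?_
      rw [Real.mul_rpow (le_of_lt (hP x)) (le_of_lt (Real.rpow_pos_of_pos (hψ x) ρ)),
        ← Real.rpow_mul (le_of_lt (hψ x)),
        Real.inv_rpow (le_of_lt (hψ x)), ← Real.rpow_neg (le_of_lt (hψ x)),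
        mul_assoc, ← Real.rpow_add (hψ x)]
      have hz : ρ * α + -(1 - α) = 0 := by linarith [h1mα]
      rw [hz, Real.rpow_zero, mul_one]
    have hH : S ≤ E ^ α * (∑ x, (ψ x)⁻¹) ^ (1 - α) := by
      rw [hsum]
      exact holder_split _ _ (fun x => le_of_lt (mul_pos (hP x) (Real.rpow_pos_of_pos (hψ x) ρ)))
        (fun x => le_of_lt (inv_pos.2 (hψ x))) hαpos hαlt1
    have hH2 : S ≤ E ^ α * k ^ (1 - α) := by
      refine hH.trans (mul_le_mul_of_nonneg_left ?_ (le_of_lt (Real.rpow_pos_of_pos hEpos _)))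
      exact Real.rpow_le_rpow (le_of_lt hKpos) hksum (by linarith)
    have hkey : lS ≤ α * lE + (1 - α) * lk := by
      have := Real.log_le_log hSpos hH2
      rwa [Real.log_mul (ne_of_gt (Real.rpow_pos_of_pos hEpos _))
        (ne_of_gt (Real.rpow_pos_of_pos hk _)), Real.log_rpow hEpos, Real.log_rpow hk] at this
    have h1mαpos : 0 < 1 - α := by linarith
    have h1 : lS ≤ ((1 / ρ) * lE + lk) * (1 - α) := by rw [hre]; exact hkey
    have h2 := (div_le_iff₀ h1mαpos).2 h1
    linarith
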